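/- Let G be a group, V a finite-dimensional real inner product space, ρ : G →* (V ≃ₗᵢ[ℝ] V) an orthogonal representation, and W : Fin p → Submodule ℝ V a family of invariant submodules such that: the family (W i) is independent and ⨆ i, W i = ⊤; each W i is irreducible (W i ≠ ⊥ and the only invariant submodules contained in W i are ⊥ and W i); and for all i ≠ j every intertwining linear map from W i to W j is zero. Then for every equivariant self-adjoint linear map A : V →ₗ[ℝ] V there exists λ : Fin p → ℝ such that for every i and every x ∈ W i, A x = λ i • x. (In particular each W i lies in an eigenspace of A, so A is diagonal in any basis adapted to the decomposition: the Walpole and Kelvin decompositions coincide.) -/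

import Mathlib

open scoped RealInnerProductSpace

set_option maxHeartbeats 1000000

theorem walpole_kelvin_multiplicity_free
    {G : Type*} [Group G] {V : Type*} [NormedAddCommGroup V]
    [InnerProductSpace ℝ V] [FiniteDimensional ℝ V]
    {p : ℕ} (ρ : G →* (V ≃ₗᵢ[ℝ] V))
    (W : Fin p → Submodule ℝ V)
    (hinv : ∀ (i : Fin p) (g : G), ∀ x ∈ W i, ρ g x ∈ W i)
    (hindep : iSupIndep W)
    (hsup : ⨆ i, W i = ⊤)
    (hirr : ∀ i : Fin p, W i ≠ ⊥ ∧ ∀ U : Submodule ℝ V,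
      (∀ (g : G), ∀ x ∈ U, ρ g x ∈ U) → U ≤ W i → U = ⊥ ∨ U = W i)
    (hnocoupling : ∀ (i j : Fin p), i ≠ j → ∀ f : W i →ₗ[ℝ] W j,
      (∀ (g : G) (x : W i),
        ((f ⟨ρ g (x : V), hinv i g (x : V) x.2⟩ : W j) : V) = ρ g ((f x : W j) : V)) →
      f = 0)
    (A : V →ₗ[ℝ] V)
    (hsa : ∀ x y : V, ⟪A x, y⟫ = ⟪x, A y⟫)
    (heqv : ∀ (g : G) (x : V), A (ρ g x) = ρ g (A x)) :
    ∃ lam : Fin p → ℝ, ∀ i : Fin p, ∀ x ∈ W i, A x = lam i • x := by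
  classical
  have hcancel : ∀ (g : G) (u : V), ρ g (ρ g⁻¹ u) = u := by
    intro g u
    have h : (ρ g * ρ g⁻¹) u = u := by
      rw [← map_mul, mul_inv_cancel, map_one]; rfl
    simpa using h
  -- orthogonal complements of invariant subspaces are invariant
  have hinvc : ∀ (j : Fin p) (g : G), ∀ y ∈ (W j)ᗮ, ρ g y ∈ (W j)ᗮ := by
    intro j g y hy
    rw [Submodule.mem_orthogonal]
    intro u hu
    have h1 : ⟪ρ g (ρ g⁻¹ u), ρ g y⟫ = ⟪ρ g⁻¹ u, y⟫ := (ρ g).inner_map_map _ _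
    rw [hcancel] at h1
    rw [h1]
    exact hy _ (hinv j g⁻¹ u hu)
  -- orthogonal projections are equivariant
  have hproj : ∀ (j : Fin p) (g : G) (x : V),
      ((Submodule.orthogonalProjection (W j) (ρ g x) : V)) = ρ g (Submodule.orthogonalProjection (W j) x) := by
    intro j g x
    apply Submodule.eq_starProjection_of_mem_orthogonal
    · exact hinv j g _ (Submodule.orthogonalProjection (W j) x).2
    · have : ρ g x - ρ g (Submodule.orthogonalProjection (W j) x)
          = ρ g (x - Submodule.orthogonalProjection (W j) x) := by
        rw [map_sub]
      rw [this]
      exact hinvc j g _ (Submodule.sub_starProjection_mem_orthogonal x)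
  -- pairwise orthogonality
  have horth : ∀ i j : Fin p, i ≠ j → W i ≤ (W j)ᗮ := by
    intro i j hij
    set f : ↥(W i) →ₗ[ℝ] ↥(W j) :=
      (Submodule.orthogonalProjection (W j)).toLinearMap.comp ((W i).subtype) with hf
    have hfz : f = 0 := by
      apply hnocoupling i j hij
      intro g x
      simpa [hf] using hproj j g (x : V)
    intro x hx
    have : Submodule.orthogonalProjection (W j) x = 0 := by
      have := congrArg (fun m => m ⟨x, hx⟩) hfz
      simpa [hf] using this
    exact Submodule.orthogonalProjectionOnto_eq_zero_iff.mp this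
  -- A maps W i into (W j)ᗮ for j ≠ i
  have hAorth : ∀ i j : Fin p, i ≠ j → ∀ x ∈ W i, A x ∈ (W j)ᗮ := by
    intro i j hij
    set f : ↥(W i) →ₗ[ℝ] ↥(W j) :=
      (Submodule.orthogonalProjection (W j)).toLinearMap.comp (A.comp ((W i).subtype)) with hf
    have hfz : f = 0 := by
      apply hnocoupling i j hij
      intro g x
      have h1 : A (ρ g (x : V)) = ρ g (A (x : V)) := heqv g x
      simp only [hf, LinearMap.comp_apply, Submodule.coe_subtype,
        ContinuousLinearMap.coe_coe, h1]
      exact hproj j g (A (x : V))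
    intro x hx
    have : Submodule.orthogonalProjection (W j) (A x) = 0 := by
      have := congrArg (fun m => m ⟨x, hx⟩) hfz
      simpa [hf] using this
    exact Submodule.orthogonalProjectionOnto_eq_zero_iff.mp this
  -- A maps W i into W i
  have hAW : ∀ i : Fin p, ∀ x ∈ W i, A x ∈ W i := by
    intro i x hx
    set K : Submodule ℝ V := ⨆ j : {j : Fin p // j ≠ i}, W j with hK
    have hKorth : ∀ v : V, (∀ j : Fin p, j ≠ i → v ∈ (W j)ᗮ) → v ∈ Kᗮ := by
      intro v hv
      rw [hK, ← Submodule.iInf_orthogonal]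
      exact Submodule.mem_iInf _ |>.mpr fun j => hv j j.2
    have hWK : W i ≤ Kᗮ := by
      intro v hv
      exact hKorth v fun j hj => horth i j (Ne.symm hj) hv
    have htop : W i ⊔ K = ⊤ := by
      rw [← top_le_iff, ← hsup]
      apply iSup_le
      intro j
      by_cases hj : j = i
      · subst hj; exact le_sup_left
      · exact le_trans (le_iSup (fun j : {j : Fin p // j ≠ i} => W j) ⟨j, hj⟩) le_sup_right
    have hKW : Kᗮ = W i := by
      have hmod : (W i ⊔ K) ⊓ Kᗮ = W i ⊔ (K ⊓ Kᗮ) :=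
        sup_inf_assoc_of_le K hWK
      rw [htop, K.inf_orthogonal_eq_bot, sup_bot_eq, top_inf_eq] at hmod
      exact hmod
    rw [← hKW]
    exact hKorth (A x) fun j hj => hAorth i j (Ne.symm hj) x hx
  -- restriction of A to W i is symmetric; extract an eigenvalue
  have key : ∀ i : Fin p, ∃ μ : ℝ, ∀ x ∈ W i, A x = μ • x := by
    intro i
    have hne := (hirr i).1
    haveI : Nontrivial ↥(W i) := Submodule.nontrivial_iff_ne_bot.mpr hne
    set B : ↥(W i) →ₗ[ℝ] ↥(W i) := A.restrict (hAW i) with hB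
    have hBsym : B.IsSymmetric := by
      intro x y
      have : ⟪A (x : V), (y : V)⟫ = ⟪(x : V), A (y : V)⟫ := hsa _ _
      simpa [hB, LinearMap.restrict_apply, Submodule.coe_inner] using this
    obtain ⟨μ, hμ⟩ : ∃ μ : ℝ, Module.End.HasEigenvalue B μ :=
      ⟨_, hBsym.hasEigenvalue_iSup_of_finiteDimensional⟩
    obtain ⟨v, hvmem, hv0⟩ := hμ.exists_hasEigenvector
    refine ⟨μ, ?_⟩
    set U : Submodule ℝ V := W i ⊓ Module.End.eigenspace A μ with hU
    have hUinv : ∀ (g : G), ∀ x ∈ U, ρ g x ∈ U := by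
      intro g x hx
      rw [hU, Submodule.mem_inf] at hx ⊢
      obtain ⟨hx1, hx2⟩ := hx
      refine ⟨hinv i g x hx1, ?_⟩
      rw [Module.End.mem_eigenspace_iff] at hx2 ⊢
      rw [heqv, hx2, map_smul]
    have hUle : U ≤ W i := inf_le_left
    have hvU : (v : V) ∈ U := by
      rw [hU, Submodule.mem_inf]
      refine ⟨v.2, ?_⟩
      rw [Module.End.mem_eigenspace_iff]
      have : B v = μ • v := Module.End.mem_eigenspace_iff.mp hvmem
      have h2 := congrArg (Subtype.val) this
      simpa [hB, LinearMap.restrict_apply] using h2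
    have hUne : U ≠ ⊥ := by
      intro h
      rw [h, Submodule.mem_bot] at hvU
      exact hv0 (Subtype.ext hvU)
    have := (hirr i).2 U hUinv hUle
    rcases this with h | h
    · exact absurd h hUne
    · intro x hx
      have : x ∈ U := h ▸ hx
      rw [hU, Submodule.mem_inf] at this
      exact Module.End.mem_eigenspace_iff.mp this.2
  choose lam hlam using key
  exact ⟨lam, hlam⟩
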